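/- The initial degree of symbolic powers that are multiples of c for monomial star configurations: for integers 1 ≤ c < s and r ≥ 1, the minimum of Σ_{i} a(i) over all a : Fin s → ℕ satisfying min_{J ⊆ Fin s, #J = c} Σ_{i∈J} a(i) ≥ rc equals r·s, attained at the constant vector a ≡ r. -/
import Mathlib


noncomputable def Sdeg (s c : ℕ) (a : Fin s → ℕ) : ℕ :=
  sInf {m : ℕ | ∃ J : Finset (Fin s), J.card = c ∧ m = ∑ i ∈ J, a i}

lemma sdeg_key (s c r : ℕ) (hc : 1 ≤ c) (hcs : c < s) (a : Fin s → ℕ)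
    (h : r * c ≤ Sdeg s c a) : r * s ≤ ∑ i, a i := by
  set σ := Tuple.sort a with hσ
  set g : Fin s → ℕ := a ∘ σ with hg
  have hmono : Monotone g := Tuple.monotone_sort a
  set j : Fin s := ⟨c, hcs⟩ with hj
  set J0 : Finset (Fin s) := Finset.Iio j with hJ0
  have hJ0card : J0.card = c := by rw [hJ0, Fin.card_Iio, hj]
  -- the sorted sum over the first c entries is an element of the Sdeg set
  have hsum_lt : r * c ≤ ∑ i ∈ J0, g i := by
    have hmem : (∑ i ∈ J0, g i) ∈
        {m : ℕ | ∃ J : Finset (Fin s), J.card = c ∧ m = ∑ i ∈ J, a i} := by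
      refine ⟨J0.map σ.toEmbedding, by simp [hJ0card], ?_⟩
      rw [Finset.sum_map]
      rfl
    exact le_trans h (Nat.sInf_le hmem)
  have hcpos : 0 < c := hc
  have hc1 : c - 1 < s := lt_of_le_of_lt (Nat.sub_le _ _) hcs
  set M : ℕ := g ⟨c - 1, hc1⟩ with hM
  have hrM : r ≤ M := by
    have hle : ∑ i ∈ J0, g i ≤ J0.card * M := by
      rw [← smul_eq_mul]
      apply Finset.sum_le_card_nsmul
      intro i hi
      apply hmono
      have h1 : (i : ℕ) < c := by simpa [hJ0, hj, Fin.lt_def] using hi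
      rw [Fin.le_def]
      simp only [Fin.val_mk]
      omega
    rw [hJ0card] at hle
    have : r * c ≤ c * M := le_trans hsum_lt hle
    nlinarith
  have hcompl : (s - c) * r ≤ ∑ i ∈ J0ᶜ, g i := by
    have hcard : J0ᶜ.card = s - c := by
      rw [Finset.card_compl, hJ0card, Fintype.card_fin]
    rw [← hcard, ← smul_eq_mul]
    apply Finset.card_nsmul_le_sum
    intro i hi
    have hic : c ≤ (i : ℕ) := by
      have := Finset.mem_compl.1 hi
      simp [hJ0, hj, Fin.lt_def] at this
      omega
    calc r ≤ M := hrM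
      _ ≤ g i := by
        apply hmono
        rw [Fin.le_def]
        simp only [Fin.val_mk]
        omega
  have hsplit : ∑ i, g i = ∑ i ∈ J0, g i + ∑ i ∈ J0ᶜ, g i :=
    (Finset.sum_add_sum_compl J0 g).symm
  have htot : ∑ i, a i = ∑ i, g i := (Equiv.sum_comp σ a).symm
  have : r * s = r * c + r * (s - c) := by
    rw [← Nat.mul_add, Nat.add_sub_cancel' (le_of_lt hcs)]
  rw [htot, hsplit, this]
  exact Nat.add_le_add hsum_lt (by rw [Nat.mul_comm]; exact hcompl)

theorem stmt_8 (s c r : ℕ) (hc : 1 ≤ c) (hcs : c < s) (hr : 1 ≤ r) :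
    sInf {N : ℕ | ∃ a : Fin s → ℕ, r * c ≤ Sdeg s c a ∧ N = ∑ i, a i} = r * s ∧
    r * c ≤ Sdeg s c (fun _ => r) ∧ (∑ _i : Fin s, r) = r * s := by
  have hsum : (∑ _i : Fin s, r) = r * s := by
    simp [Finset.sum_const, mul_comm]
  obtain ⟨J, -, hJcard⟩ :=
    Finset.exists_subset_card_eq (s := (Finset.univ : Finset (Fin s))) (n := c)
      (by simp [le_of_lt hcs])
  have hSdeg : r * c ≤ Sdeg s c (fun _ => r) := by
    unfold Sdeg
    have hne : {m : ℕ | ∃ K : Finset (Fin s), K.card = c ∧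
        m = ∑ i ∈ K, (fun _ => r) i}.Nonempty := ⟨∑ i ∈ J, r, J, hJcard, rfl⟩
    apply le_csInf hne
    rintro m ⟨K, hKcard, rfl⟩
    simp [Finset.sum_const, hKcard, mul_comm]
  refine ⟨?_, hSdeg, hsum⟩
  apply le_antisymm
  · exact Nat.sInf_le ⟨fun _ => r, hSdeg, hsum.symm⟩
  · have hne : {N : ℕ | ∃ a : Fin s → ℕ, r * c ≤ Sdeg s c a ∧ N = ∑ i, a i}.Nonempty :=
      ⟨r * s, fun _ => r, hSdeg, hsum.symm⟩
    apply le_csInf hne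
    rintro N ⟨a, ha, rfl⟩
    exact sdeg_key s c r hc hcs a ha
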